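/- arXiv:1111.6230 — 3 statements merged into one kernel-verified Lean document; each statement's English description precedes it below -/
import Mathlib

section
/- Let H be a separable Hilbert space, let η₁,…,η_n be H-valued random variables with E‖η_j‖² < ∞ for all j, let 𝒢₀ ⊆ 𝒢₁ ⊆ … ⊆ 𝒢_n be sub-σ-algebras, let S_n = Σ_{j=1}^n η_j, let m ≥ 1 be an integer, and with the convention η_j = 0 for j > n define, for 1 ≤ i ≤ n, d_i = E[‖S_n‖ | 𝒢_i] − E[‖S_n‖ | 𝒢_{i−1}] − E[‖S_n − η_i − ⋯ − η_{i+m−1}‖ | 𝒢_i] + E[‖S_n − η_i − ⋯ − η_{i+m−1}‖ | 𝒢_{i−1}]. Then almost surely E[d_i² | 𝒢_{i−1}] ≤ m·Σ_{j=i}^{i+m−1} E[‖η_j‖² | 𝒢_{i−1}]. -/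
open MeasureTheory

private lemma int_mul_of_L2 {Ω : Type*} [MeasurableSpace Ω] {μ : Measure Ω} {f g : Ω → ℝ}
    (hf : MemLp f 2 μ) (hg : MemLp g 2 μ) : Integrable (fun ω => f ω * g ω) μ := by
  refine Integrable.mono' ((hf.integrable_sq.add hg.integrable_sq).const_mul (1/2 : ℝ))
    (hf.aestronglyMeasurable.mul hg.aestronglyMeasurable) ?_
  filter_upwards with ω
  simp only [Pi.add_apply]
  rw [Real.norm_eq_abs, abs_mul]
  nlinarith [sq_nonneg (|f ω| - |g ω|), sq_abs (f ω), sq_abs (g ω), abs_nonneg (f ω),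
    abs_nonneg (g ω)]

private lemma memℒp_two_condexp {Ω : Type*} {m m0 : MeasurableSpace Ω} (hm : m ≤ m0)
    {μ : Measure Ω} [IsFiniteMeasure μ] {f : Ω → ℝ} (hf : MemLp f 2 μ) :
    MemLp (μ[f|m]) 2 μ := by
  have hint : Integrable f μ := hf.integrable one_le_two
  have heq : ((condExpL2 ℝ ℝ hm (hf.toLp f) : Lp ℝ 2 μ) : Ω → ℝ) =ᵐ[μ] μ[f|m] := by
    refine ae_eq_condExp_of_forall_setIntegral_eq hm hint
      (fun s _ _ => (integrable_condExpL2_of_isFiniteMeasure hm).integrableOn)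
      (fun s hs hμs => ?_) (aestronglyMeasurable_condExpL2 hm _)
    rw [integral_condExpL2_eq hm (hf.toLp f) hs hμs.ne]
    exact setIntegral_congr_ae (hm s hs) ((hf.coeFn_toLp).mono fun x hx _ => hx)
  exact (Lp.memLp _).ae_eq heq

private lemma sq_condexp_le {Ω : Type*} {m m0 : MeasurableSpace Ω} (hm : m ≤ m0)
    {μ : Measure Ω} [IsFiniteMeasure μ] {f : Ω → ℝ} (hf : MemLp f 2 μ) :
    (fun ω => (μ[f|m]) ω ^ 2) ≤ᵐ[μ] μ[fun ω => f ω ^ 2|m] := by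
  have hfint : Integrable f μ := hf.integrable one_le_two
  have hgm : StronglyMeasurable[m] (μ[f|m]) := stronglyMeasurable_condExp
  have hgL2 : MemLp (μ[f|m]) 2 μ := memℒp_two_condexp hm hf
  have hf2 : Integrable (fun ω => f ω ^ 2) μ := hf.integrable_sq
  have hg2 : Integrable (fun ω => (μ[f|m]) ω ^ 2) μ := hgL2.integrable_sq
  have hgf : Integrable (fun ω => (μ[f|m]) ω * f ω) μ := int_mul_of_L2 hgL2 hf
  have hE0 : 0 ≤ᵐ[μ] μ[fun ω => (f ω - (μ[f|m]) ω) ^ 2|m] :=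
    condExp_nonneg (Filter.Eventually.of_forall fun ω => sq_nonneg _)
  have e1 : (fun ω => (f ω - (μ[f|m]) ω) ^ 2)
      = (fun ω => f ω ^ 2) - fun ω => 2 * ((μ[f|m]) ω * f ω) - (μ[f|m]) ω ^ 2 := by
    funext ω; simp only [Pi.sub_apply]; ring
  have c1 : μ[fun ω => (f ω - (μ[f|m]) ω) ^ 2|m]
      =ᵐ[μ] μ[fun ω => f ω ^ 2|m] - μ[fun ω => 2 * ((μ[f|m]) ω * f ω) - (μ[f|m]) ω ^ 2|m] := by
    rw [e1]; exact condExp_sub hf2 ((hgf.const_mul 2).sub hg2) m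
  have c2 : μ[fun ω => 2 * ((μ[f|m]) ω * f ω) - (μ[f|m]) ω ^ 2|m]
      =ᵐ[μ] μ[fun ω => 2 * ((μ[f|m]) ω * f ω)|m] - μ[fun ω => (μ[f|m]) ω ^ 2|m] :=
    condExp_sub (hgf.const_mul 2) hg2 m
  have c3 : μ[fun ω => 2 * ((μ[f|m]) ω * f ω)|m]
      =ᵐ[μ] (2 : ℝ) • μ[fun ω => (μ[f|m]) ω * f ω|m] :=
    condExp_smul (2 : ℝ) (fun ω => (μ[f|m]) ω * f ω) m
  have c4 : μ[fun ω => (μ[f|m]) ω * f ω|m] =ᵐ[μ] fun ω => (μ[f|m]) ω * (μ[f|m]) ω :=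
    condExp_mul_of_stronglyMeasurable_left hgm hgf hfint
  have c6 : μ[fun ω => (μ[f|m]) ω ^ 2|m] = fun ω => (μ[f|m]) ω ^ 2 :=
    condExp_of_stronglyMeasurable hm (hgm.pow 2) hg2
  filter_upwards [hE0, c1, c2, c3, c4] with ω h0 h1 h2 h3 h4
  rw [h1] at h0
  simp only [Pi.sub_apply, Pi.smul_apply, smul_eq_mul, Pi.zero_apply] at h0 h2 h3
  rw [h2, h3, h4, congrFun c6 ω] at h0
  linarith [h0, pow_two ((μ[f|m]) ω)]

private lemma condexp_sq_diff_le {Ω : Type*} {m₁ m₂ m0 : MeasurableSpace Ω} {μ : Measure Ω}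
    [IsFiniteMeasure μ] (h12 : m₁ ≤ m₂) (h2 : m₂ ≤ m0)
    {Z : Ω → ℝ} (hZ : MemLp Z 2 μ) :
    μ[fun ω => ((μ[Z|m₂]) ω - (μ[Z|m₁]) ω) ^ 2|m₁] ≤ᵐ[μ] μ[fun ω => Z ω ^ 2|m₁] := by
  have h1 : m₁ ≤ m0 := h12.trans h2
  have hA2 : MemLp (μ[Z|m₂]) 2 μ := memℒp_two_condexp h2 hZ
  have hB2 : MemLp (μ[Z|m₁]) 2 μ := memℒp_two_condexp h1 hZ
  have hAint : Integrable (μ[Z|m₂]) μ := hA2.integrable one_le_two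
  have iA : Integrable (fun ω => (μ[Z|m₂]) ω ^ 2) μ := hA2.integrable_sq
  have iB : Integrable (fun ω => (μ[Z|m₁]) ω ^ 2) μ := hB2.integrable_sq
  have iBA : Integrable (fun ω => (μ[Z|m₁]) ω * (μ[Z|m₂]) ω) μ := int_mul_of_L2 hB2 hA2
  have e1 : (fun ω => ((μ[Z|m₂]) ω - (μ[Z|m₁]) ω) ^ 2)
      = (fun ω => (μ[Z|m₂]) ω ^ 2)
        - fun ω => 2 * ((μ[Z|m₁]) ω * (μ[Z|m₂]) ω) - (μ[Z|m₁]) ω ^ 2 := by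
    funext ω; simp only [Pi.sub_apply]; ring
  have c1 : μ[fun ω => ((μ[Z|m₂]) ω - (μ[Z|m₁]) ω) ^ 2|m₁]
      =ᵐ[μ] μ[fun ω => (μ[Z|m₂]) ω ^ 2|m₁]
        - μ[fun ω => 2 * ((μ[Z|m₁]) ω * (μ[Z|m₂]) ω) - (μ[Z|m₁]) ω ^ 2|m₁] := by
    rw [e1]; exact condExp_sub iA ((iBA.const_mul 2).sub iB) m₁
  have c2 : μ[fun ω => 2 * ((μ[Z|m₁]) ω * (μ[Z|m₂]) ω) - (μ[Z|m₁]) ω ^ 2|m₁]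
      =ᵐ[μ] μ[fun ω => 2 * ((μ[Z|m₁]) ω * (μ[Z|m₂]) ω)|m₁]
        - μ[fun ω => (μ[Z|m₁]) ω ^ 2|m₁] :=
    condExp_sub (iBA.const_mul 2) iB m₁
  have c3 : μ[fun ω => 2 * ((μ[Z|m₁]) ω * (μ[Z|m₂]) ω)|m₁]
      =ᵐ[μ] (2 : ℝ) • μ[fun ω => (μ[Z|m₁]) ω * (μ[Z|m₂]) ω|m₁] :=
    condExp_smul (2 : ℝ) _ m₁
  have c4 : μ[fun ω => (μ[Z|m₁]) ω * (μ[Z|m₂]) ω|m₁]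
      =ᵐ[μ] fun ω => (μ[Z|m₁]) ω * (μ[μ[Z|m₂]|m₁]) ω :=
    condExp_mul_of_stronglyMeasurable_left stronglyMeasurable_condExp iBA hAint
  have c5 : μ[μ[Z|m₂]|m₁] =ᵐ[μ] μ[Z|m₁] := condExp_condExp_of_le h12 h2
  have c6 : μ[fun ω => (μ[Z|m₁]) ω ^ 2|m₁] = fun ω => (μ[Z|m₁]) ω ^ 2 :=
    condExp_of_stronglyMeasurable h1 (stronglyMeasurable_condExp.pow 2) iB
  have c7 : (fun ω => (μ[Z|m₂]) ω ^ 2) ≤ᵐ[μ] μ[fun ω => Z ω ^ 2|m₂] := sq_condexp_le h2 hZ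
  have c8 : μ[fun ω => (μ[Z|m₂]) ω ^ 2|m₁] ≤ᵐ[μ] μ[μ[fun ω => Z ω ^ 2|m₂]|m₁] :=
    condExp_mono iA integrable_condExp c7
  have c9 : μ[μ[fun ω => Z ω ^ 2|m₂]|m₁] =ᵐ[μ] μ[fun ω => Z ω ^ 2|m₁] :=
    condExp_condExp_of_le h12 h2
  filter_upwards [c1, c2, c3, c4, c5, c8, c9] with ω h1' h2' h3' h4' h5' h8' h9'
  simp only [Pi.sub_apply, Pi.smul_apply, smul_eq_mul] at h1' h2' h3'
  rw [h1', h2', h3', h4', h5', congrFun c6 ω]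
  have hBsq := pow_two ((μ[Z|m₁]) ω)
  linarith [h8', h9', sq_nonneg ((μ[Z|m₁]) ω)]

/-- Lemma 2, second bound: with `S_n = Σ_{j=1}^n η_j`, sub-σ-algebras
`𝒢₀ ⊆ 𝒢₁ ⊆ ⋯`, `E‖η_j‖² < ∞`, the convention `η_j = 0` for `j > n`, and
`d_i = E[‖S_n‖|𝒢_i] − E[‖S_n‖|𝒢_{i−1}] − E[‖S_n − η_i − ⋯ − η_{i+m−1}‖|𝒢_i]
+ E[‖S_n − η_i − ⋯ − η_{i+m−1}‖|𝒢_{i−1}]`, one has almost surely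
`E[d_i²|𝒢_{i−1}] ≤ m·Σ_{j=i}^{i+m−1} E[‖η_j‖²|𝒢_{i−1}]`. -/
theorem stmt_8 {Ω : Type*} [m0 : MeasurableSpace Ω] (μ : Measure Ω) [IsProbabilityMeasure μ]
    {H : Type*} [NormedAddCommGroup H] [InnerProductSpace ℝ H] [CompleteSpace H]
    [SecondCountableTopology H]
    (n m : ℕ) (hn : 1 ≤ n) (hm : 1 ≤ m)
    (η : ℕ → Ω → H) (hηL2 : ∀ j, MemLp (η j) 2 μ)
    (G : ℕ → MeasurableSpace Ω) (hGmono : Monotone G) (hGle : ∀ i, G i ≤ m0)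
    (S : Ω → H) (hS : ∀ ω, S ω = ∑ j ∈ Finset.Icc 1 n, η j ω)
    (η' : ℕ → Ω → H) (hη' : ∀ (j : ℕ) (ω : Ω), η' j ω = if j ≤ n then η j ω else 0)
    (d : ℕ → Ω → ℝ)
    (hd : ∀ i : ℕ, d i = fun ω =>
      (μ[fun ω' => ‖S ω'‖ | G i]) ω - (μ[fun ω' => ‖S ω'‖ | G (i - 1)]) ω
      - (μ[fun ω' => ‖S ω' - ∑ j ∈ Finset.Icc i (i + m - 1), η' j ω'‖ | G i]) ω
      + (μ[fun ω' => ‖S ω' - ∑ j ∈ Finset.Icc i (i + m - 1), η' j ω'‖ | G (i - 1)]) ω) :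
    ∀ i : ℕ, 1 ≤ i → i ≤ n →
      ∀ᵐ ω ∂μ,
        (μ[fun ω' => d i ω' ^ 2 | G (i - 1)]) ω
          ≤ m * ∑ j ∈ Finset.Icc i (i + m - 1), (μ[fun ω' => ‖η' j ω'‖ ^ 2 | G (i - 1)]) ω := by
  intro i hi1 hin
  have hm' : G (i - 1) ≤ m0 := hGle _
  have hmi : G i ≤ m0 := hGle _
  have hle : G (i - 1) ≤ G i := hGmono (Nat.sub_le i 1)
  set s := Finset.Icc i (i + m - 1) with hs_def
  have hcard : (s.card : ℝ) = (m : ℝ) := by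
    have hc : s.card = m := by rw [hs_def, Nat.card_Icc]; omega
    exact_mod_cast congrArg (Nat.cast : ℕ → ℝ) hc
  have hη'L2 : ∀ j, MemLp (η' j) 2 μ := by
    intro j
    by_cases h : j ≤ n
    · have hj : η' j = η j := funext fun ω => by rw [hη' j ω, if_pos h]
      rw [hj]; exact hηL2 j
    · have hj : η' j = fun _ => (0 : H) := funext fun ω => by rw [hη' j ω, if_neg h]
      rw [hj]; exact MemLp.zero'
  have hSL2 : MemLp S 2 μ := by
    have hSfun : S = fun ω => ∑ j ∈ Finset.Icc 1 n, η j ω := funext hS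
    rw [hSfun]; exact memLp_finsetSum _ fun j _ => hηL2 j
  have hTL2 : MemLp (fun ω => ∑ j ∈ s, η' j ω) 2 μ := memLp_finsetSum _ fun j _ => hη'L2 j
  have hXL2 : MemLp (fun ω => ‖S ω‖) 2 μ := hSL2.norm
  have hYL2 : MemLp (fun ω => ‖S ω - ∑ j ∈ s, η' j ω‖) 2 μ := (hSL2.sub hTL2).norm
  have hZL2 : MemLp (fun ω => ‖S ω‖ - ‖S ω - ∑ j ∈ s, η' j ω‖) 2 μ := hXL2.sub hYL2
  have hXint := hXL2.integrable one_le_two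
  have hYint := hYL2.integrable one_le_two
  have hAe : μ[fun ω => ‖S ω‖ - ‖S ω - ∑ j ∈ s, η' j ω‖|G i]
      =ᵐ[μ] μ[fun ω => ‖S ω‖|G i] - μ[fun ω => ‖S ω - ∑ j ∈ s, η' j ω‖|G i] :=
    condExp_sub hXint hYint (G i)
  have hBe : μ[fun ω => ‖S ω‖ - ‖S ω - ∑ j ∈ s, η' j ω‖|G (i - 1)]
      =ᵐ[μ] μ[fun ω => ‖S ω‖|G (i - 1)] - μ[fun ω => ‖S ω - ∑ j ∈ s, η' j ω‖|G (i - 1)] :=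
    condExp_sub hXint hYint (G (i - 1))
  have hdZ : ∀ᵐ ω ∂μ, d i ω
      = (μ[fun ω' => ‖S ω'‖ - ‖S ω' - ∑ j ∈ s, η' j ω'‖|G i]) ω
        - (μ[fun ω' => ‖S ω'‖ - ‖S ω' - ∑ j ∈ s, η' j ω'‖|G (i - 1)]) ω := by
    filter_upwards [hAe, hBe] with ω h1 h2
    simp only [Pi.sub_apply] at h1 h2
    simp only [hd i]
    rw [← hs_def, h1, h2]
    ring
  have hsq : μ[fun ω' => d i ω' ^ 2|G (i - 1)]
      =ᵐ[μ] μ[fun ω => ((μ[fun ω' => ‖S ω'‖ - ‖S ω' - ∑ j ∈ s, η' j ω'‖|G i]) ω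
          - (μ[fun ω' => ‖S ω'‖ - ‖S ω' - ∑ j ∈ s, η' j ω'‖|G (i - 1)]) ω) ^ 2|G (i - 1)] :=
    condExp_congr_ae (hdZ.mono fun ω h => by simp only [h])
  have hmain := condexp_sq_diff_le hle hmi hZL2
  have hptw : ∀ ω, (‖S ω‖ - ‖S ω - ∑ j ∈ s, η' j ω‖) ^ 2 ≤ (m : ℝ) * ∑ j ∈ s, ‖η' j ω‖ ^ 2 := by
    intro ω
    have h1 : |‖S ω‖ - ‖S ω - ∑ j ∈ s, η' j ω‖| ≤ ‖∑ j ∈ s, η' j ω‖ := by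
      have h := abs_norm_sub_norm_le (S ω) (S ω - ∑ j ∈ s, η' j ω)
      rwa [sub_sub_cancel] at h
    calc (‖S ω‖ - ‖S ω - ∑ j ∈ s, η' j ω‖) ^ 2
        = |‖S ω‖ - ‖S ω - ∑ j ∈ s, η' j ω‖| ^ 2 := (sq_abs _).symm
      _ ≤ ‖∑ j ∈ s, η' j ω‖ ^ 2 := pow_le_pow_left₀ (abs_nonneg _) h1 2
      _ ≤ (∑ j ∈ s, ‖η' j ω‖) ^ 2 := pow_le_pow_left₀ (norm_nonneg _) (norm_sum_le _ _) 2
      _ ≤ (s.card : ℝ) * ∑ j ∈ s, ‖η' j ω‖ ^ 2 := sq_sum_le_card_mul_sum_sq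
      _ = (m : ℝ) * ∑ j ∈ s, ‖η' j ω‖ ^ 2 := by rw [hcard]
  have hint_j : ∀ j ∈ s, Integrable (fun ω => ‖η' j ω‖ ^ 2) μ :=
    fun j _ => (hη'L2 j).norm.integrable_sq
  have hcmpint : Integrable (fun ω => (m : ℝ) * ∑ j ∈ s, ‖η' j ω‖ ^ 2) μ :=
    (integrable_finset_sum s hint_j).const_mul _
  have hmono : μ[fun ω => (‖S ω‖ - ‖S ω - ∑ j ∈ s, η' j ω‖) ^ 2|G (i - 1)]
      ≤ᵐ[μ] μ[fun ω => (m : ℝ) * ∑ j ∈ s, ‖η' j ω‖ ^ 2|G (i - 1)] :=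
    condExp_mono hZL2.integrable_sq hcmpint (Filter.Eventually.of_forall hptw)
  have hsmul : μ[fun ω => (m : ℝ) * ∑ j ∈ s, ‖η' j ω‖ ^ 2|G (i - 1)]
      =ᵐ[μ] (m : ℝ) • μ[fun ω => ∑ j ∈ s, ‖η' j ω‖ ^ 2|G (i - 1)] :=
    condExp_smul (m : ℝ) (fun ω => ∑ j ∈ s, ‖η' j ω‖ ^ 2) (G (i - 1))
  have hsum_eq : (fun ω => ∑ j ∈ s, ‖η' j ω‖ ^ 2) = ∑ j ∈ s, fun ω => ‖η' j ω‖ ^ 2 := by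
    funext ω; rw [Finset.sum_apply]
  have hsum : μ[fun ω => ∑ j ∈ s, ‖η' j ω‖ ^ 2|G (i - 1)]
      =ᵐ[μ] ∑ j ∈ s, μ[fun ω => ‖η' j ω‖ ^ 2|G (i - 1)] := by
    rw [hsum_eq]; exact condExp_finsetSum hint_j (G (i - 1))
  filter_upwards [hsq, hmain, hmono, hsmul, hsum] with ω e1 e2 e3 e4 e5
  rw [e1]
  have hfin := (e2.trans e3)
  rw [e4] at hfin
  simp only [Pi.smul_apply, smul_eq_mul] at hfin
  rw [e5] at hfin
  simp only [Finset.sum_apply] at hfin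
  exact hfin
end

section
/- Let m and n be positive integers with m dividing n, and let Z₁,…,Z_n be identically distributed {0,1}-valued random variables with p̃ := P(Z_i = 1), such that Z_i and Z_j are independent whenever |i − j| ≥ m (more strongly, for each residue class r mod m, the variables {Z_{r+jm}} are mutually independent). Let k be a positive integer with n·p̃ ≥ 2k. Then P(Σ_{i=1}^n Z_i ≤ k) ≤ 2m·exp(−(3/14)·k/m). -/
open MeasureTheory ProbabilityTheory

/-- if `Z₁, …, Z_n` are identically distributed `{0,1}`-valued random
variables with `p̃ = P(Z_i = 1)`, independent within each residue class mod `m`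
(`m ∣ n`), and `n·p̃ ≥ 2k`, then `P(Σᵢ Zᵢ ≤ k) ≤ 2m·exp(−(3/14)·k/m)`. -/
theorem stmt_17 {Ω : Type*} [MeasurableSpace Ω] (μ : Measure Ω) [IsProbabilityMeasure μ]
    (n m k : ℕ) (hm : 1 ≤ m) (hmn : m ∣ n) (hn : 1 ≤ n) (hk : 1 ≤ k)
    (Z : ℕ → Ω → ℝ) (hZmeas : ∀ i, Measurable (Z i))
    (hZ01 : ∀ i ω, Z i ω = 0 ∨ Z i ω = 1)
    (p : ℝ) (hp : ∀ i ∈ Finset.Icc 1 n, μ {ω | Z i ω = 1} = ENNReal.ofReal p)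
    (hindep : ∀ r ∈ Finset.Icc 1 m,
      iIndepFun
        (fun (j : Fin (n / m)) => Z (r + j * m)) μ)
    (hnp : 2 * (k : ℝ) ≤ n * p) :
    μ {ω | ∑ i ∈ Finset.Icc 1 n, Z i ω ≤ k}
      ≤ ENNReal.ofReal (2 * m * Real.exp (-(3 / 14) * k / m)) := by
  classical
  set N := n / m with hNdef
  have hm0 : 0 < m := hm
  have hNm : N * m = n := Nat.div_mul_cancel hmn
  have hN1 : 1 ≤ N := (Nat.one_le_div_iff hm).mpr (Nat.le_of_dvd (by omega) hmn)
  have hmR : (0:ℝ) < m := by exact_mod_cast hm0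
  have hnR : (0:ℝ) < n := by exact_mod_cast hn
  have hkR : (1:ℝ) ≤ k := by exact_mod_cast hk
  have hp0 : 0 < p := by nlinarith
  have hp1 : p ≤ 1 := by
    have h1 : (1:ℕ) ∈ Finset.Icc 1 n := by simp [hn]
    have := hp 1 h1
    have hle : ENNReal.ofReal p ≤ 1 := by
      rw [← this]; exact prob_le_one
    exact (ENNReal.ofReal_le_one).mp hle
  set ε : ℝ := (k:ℝ) / m with hεdef
  have hε0 : 0 < ε := by positivity
  set t : ℝ := -Real.log 2 with htdef
  have ht : t ≤ 0 := neg_nonpos.mpr (Real.log_nonneg one_le_two)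
  have hZnn : ∀ i ω, 0 ≤ Z i ω := by
    intro i ω; rcases hZ01 i ω with h | h <;> simp [h]
  have hZbd : ∀ i ω, Z i ω ≤ 1 := by
    intro i ω; rcases hZ01 i ω with h | h <;> simp [h]
  -- membership of class indices
  have hmem : ∀ r ∈ Finset.Icc 1 m, ∀ j : Fin N, r + (j : ℕ) * m ∈ Finset.Icc 1 n := by
    intro r hr j
    rw [Finset.mem_Icc] at hr ⊢
    have hj : (j : ℕ) < N := j.isLt
    have h1 : (j : ℕ) * m ≤ (N - 1) * m := Nat.mul_le_mul_right m (by omega)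
    have h2 : m ≤ N * m := Nat.le_mul_of_pos_left m hN1
    have h3 : (N - 1) * m = N * m - m := by rw [Nat.sub_one_mul]
    omega
  -- expectation of each Z i
  have hZint : ∀ i, Integrable (Z i) μ := by
    intro i
    refine Integrable.mono' (integrable_const 1) (hZmeas i).aestronglyMeasurable ?_
    exact Filter.Eventually.of_forall fun ω => by
      rw [Real.norm_eq_abs, abs_of_nonneg (hZnn i ω)]; exact hZbd i ω
  have hEZ : ∀ i ∈ Finset.Icc 1 n, ∫ ω, Z i ω ∂μ = p := by
    intro i hi
    have hA : MeasurableSet {ω | Z i ω = 1} := hZmeas i (measurableSet_singleton 1)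
    have heq : (fun ω => Z i ω) = Set.indicator {ω | Z i ω = 1} (fun _ => (1:ℝ)) := by
      funext ω
      rcases hZ01 i ω with h | h
      · rw [Set.indicator_of_notMem (by simp [Set.mem_setOf_eq, h]) _]
        exact h
      · rw [Set.indicator_of_mem (by simpa [Set.mem_setOf_eq] using h) _]
        exact h
    rw [heq, integral_indicator_const _ hA, measureReal_def, hp i hi, smul_eq_mul, mul_one,
      ENNReal.toReal_ofReal hp0.le]
  -- mgf of each Z i at t
  have hmgf : ∀ i ∈ Finset.Icc 1 n, mgf (Z i) μ t = 1 - p / 2 := by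
    intro i hi
    have hexp : ∀ ω, Real.exp (t * Z i ω) = 1 + (Real.exp t - 1) * Z i ω := by
      intro ω; rcases hZ01 i ω with h | h <;> simp [h]
    have het : Real.exp t = 1 / 2 := by
      rw [htdef, Real.exp_neg, Real.exp_log two_pos]; norm_num
    unfold mgf
    simp_rw [hexp]
    rw [integral_add (integrable_const 1) ((hZint i).const_mul _), integral_const,
      integral_const_mul, hEZ i hi, probReal_univ, het]
    simp; ring
  -- integrability of exp(t * sums)
  have hintS : ∀ (f : Ω → ℝ), Measurable f → (∀ ω, 0 ≤ f ω) →
      Integrable (fun ω => Real.exp (t * f ω)) μ := by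
    intro f hf hf0
    refine Integrable.mono' (integrable_const 1) ((hf.const_mul t).exp).aestronglyMeasurable ?_
    refine Filter.Eventually.of_forall fun ω => ?_
    rw [Real.norm_eq_abs, abs_of_nonneg (Real.exp_pos _).le]
    calc Real.exp (t * f ω) ≤ Real.exp 0 :=
          Real.exp_le_exp.mpr (mul_nonpos_of_nonpos_of_nonneg ht (hf0 ω))
      _ = 1 := Real.exp_zero
  -- per-class Chernoff bound
  have hclass : ∀ r ∈ Finset.Icc 1 m,
      μ {ω | (∑ j : Fin N, Z (r + (j : ℕ) * m) ω) ≤ ε}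
        ≤ ENNReal.ofReal (2 * Real.exp (-(3 / 14) * ε)) := by
    intro r hr
    set S : Ω → ℝ := fun ω => ∑ j : Fin N, Z (r + (j : ℕ) * m) ω with hSdef
    have hSmeas : Measurable S := Finset.measurable_sum _ fun j _ => hZmeas _
    have hSnn : ∀ ω, 0 ≤ S ω := fun ω => Finset.sum_nonneg fun j _ => hZnn _ ω
    have hcher := measure_le_le_exp_mul_mgf (μ := μ) (X := S) ε ht (hintS S hSmeas hSnn)
    have hXeq : S = ∑ j : Fin N, (fun ω => Z (r + (j : ℕ) * m) ω) := by
      funext ω; rw [hSdef]; simp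
    have hmgfS : mgf S μ t = (1 - p / 2) ^ N := by
      rw [hXeq, (hindep r hr).mgf_sum (fun j => hZmeas _) Finset.univ]
      rw [Finset.prod_congr rfl fun j _ => hmgf _ (hmem r hr j)]
      simp
    rw [hmgfS] at hcher
    -- numeric bound
    have h1 : (0:ℝ) ≤ 1 - p / 2 := by linarith
    have h2 : 1 - p / 2 ≤ Real.exp (-(p / 2)) := by
      have := Real.add_one_le_exp (-(p / 2)); linarith
    have h3 : (1 - p / 2) ^ N ≤ Real.exp (-(p / 2)) ^ N := pow_le_pow_left₀ h1 h2 N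
    have h4 : Real.exp (-(p / 2)) ^ N = Real.exp ((N : ℝ) * -(p / 2)) :=
      (Real.exp_nat_mul _ N).symm
    have hNmR : (N : ℝ) * m = n := by exact_mod_cast hNm
    have h5 : ε ≤ (N : ℝ) * (p / 2) := by
      rw [hεdef, div_le_iff₀ hmR]; nlinarith
    have h6 : Real.exp ((N : ℝ) * -(p / 2)) ≤ Real.exp (-ε) := by
      apply Real.exp_le_exp.mpr; nlinarith
    have hlog2 : Real.log 2 < 0.6931471808 := Real.log_two_lt_d9
    have h7 : Real.exp (-t * ε) * (1 - p / 2) ^ N ≤ 2 * Real.exp (-(3 / 14) * ε) := by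
      have hb : (1 - p / 2) ^ N ≤ Real.exp (-ε) := by
        calc (1 - p / 2) ^ N ≤ Real.exp (-(p / 2)) ^ N := h3
          _ = Real.exp ((N : ℝ) * -(p / 2)) := h4
          _ ≤ Real.exp (-ε) := h6
      calc Real.exp (-t * ε) * (1 - p / 2) ^ N
          ≤ Real.exp (-t * ε) * Real.exp (-ε) :=
            mul_le_mul_of_nonneg_left hb (Real.exp_pos _).le
        _ = Real.exp (-t * ε + -ε) := (Real.exp_add _ _).symm
        _ ≤ Real.exp (-(3 / 14) * ε) := by
            apply Real.exp_le_exp.mpr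
            rw [htdef]
            nlinarith
        _ ≤ 2 * Real.exp (-(3 / 14) * ε) := by nlinarith [Real.exp_pos (-(3 / 14) * ε)]
    have hfin : μ {ω | S ω ≤ ε} ≠ ⊤ := measure_ne_top μ _
    rw [← ENNReal.ofReal_toReal hfin]
    exact ENNReal.ofReal_le_ofReal (hcher.trans h7)
  -- decomposition of the total sum
  have decomp : ∀ ω, ∑ i ∈ Finset.Icc 1 n, Z i ω
      = ∑ r ∈ Finset.Icc 1 m, ∑ j : Fin N, Z (r + (j : ℕ) * m) ω := by
    intro ω
    have hfin : ∀ r, ∑ j : Fin N, Z (r + (j : ℕ) * m) ω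
        = ∑ j ∈ Finset.range N, Z (r + j * m) ω := fun r =>
      Fin.sum_univ_eq_sum_range (fun j => Z (r + j * m) ω) N
    simp_rw [hfin]
    rw [← Finset.sum_product']
    refine Finset.sum_nbij' (fun a => ((a - 1) % m + 1, (a - 1) / m))
      (fun q => q.1 + q.2 * m) ?_ ?_ ?_ ?_ ?_
    · intro a ha
      rw [Finset.mem_Icc] at ha
      rw [Finset.mem_product, Finset.mem_Icc, Finset.mem_range]
      refine ⟨⟨by omega, by have := Nat.mod_lt (a - 1) hm0; omega⟩, ?_⟩
      rw [Nat.div_lt_iff_lt_mul hm0]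
      omega
    · intro q hq
      rw [Finset.mem_product, Finset.mem_Icc, Finset.mem_range] at hq
      rw [Finset.mem_Icc]
      obtain ⟨⟨h1, h2⟩, h3⟩ := hq
      constructor
      · omega
      · have hle : q.2 * m ≤ (N - 1) * m := Nat.mul_le_mul_right m (by omega)
        have h2' : m ≤ N * m := Nat.le_mul_of_pos_left m hN1
        have h3' : (N - 1) * m = N * m - m := by rw [Nat.sub_one_mul]
        omega
    · intro a ha
      dsimp only
      rw [Finset.mem_Icc] at ha
      rw [add_right_comm, Nat.mod_add_div']
      omega
    · intro q hq
      rw [Finset.mem_product, Finset.mem_Icc, Finset.mem_range] at hq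
      obtain ⟨⟨h1, h2⟩, h3⟩ := hq
      have hsub : q.1 + q.2 * m - 1 = (q.1 - 1) + q.2 * m := by
        rw [Nat.sub_add_comm h1]
      have hmod : ((q.1 - 1) + q.2 * m) % m = q.1 - 1 := by
        rw [Nat.add_mul_mod_self_right, Nat.mod_eq_of_lt (by omega)]
      have hdiv : ((q.1 - 1) + q.2 * m) / m = q.2 := by
        rw [Nat.add_mul_div_right _ _ hm0, Nat.div_eq_of_lt (by omega)]
        omega
      have : ((q.1 + q.2 * m - 1) % m + 1, (q.1 + q.2 * m - 1) / m)
          = (q.1, q.2) := by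
        rw [hsub, hmod, hdiv]
        have : q.1 - 1 + 1 = q.1 := by omega
        rw [this]
      rw [this]
    · intro a ha
      dsimp only
      rw [Finset.mem_Icc] at ha
      congr 1
      rw [add_right_comm, Nat.mod_add_div']
      omega
  -- union bound
  have hsub : {ω | ∑ i ∈ Finset.Icc 1 n, Z i ω ≤ (k : ℝ)}
      ⊆ ⋃ r ∈ Finset.Icc 1 m, {ω | (∑ j : Fin N, Z (r + (j : ℕ) * m) ω) ≤ ε} := by
    intro ω hω
    simp only [Set.mem_setOf_eq] at hω
    rw [decomp ω] at hω
    by_contra hc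
    simp only [Set.mem_iUnion, Set.mem_setOf_eq, not_exists, not_le] at hc
    have hlt : ∑ r ∈ Finset.Icc 1 m, ε < ∑ r ∈ Finset.Icc 1 m,
        ∑ j : Fin N, Z (r + (j : ℕ) * m) ω :=
      Finset.sum_lt_sum_of_nonempty ⟨1, by simp [hm]⟩ fun r hr => hc r hr
    have hsum : ∑ r ∈ Finset.Icc 1 m, ε = (m : ℝ) * ε := by
      rw [Finset.sum_const, Nat.card_Icc]
      simp [nsmul_eq_mul]
    have hme : (m : ℝ) * ε = k := by
      rw [hεdef]; field_simp
    rw [hsum, hme] at hlt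
    linarith
  calc μ {ω | ∑ i ∈ Finset.Icc 1 n, Z i ω ≤ (k : ℝ)}
      ≤ μ (⋃ r ∈ Finset.Icc 1 m, {ω | (∑ j : Fin N, Z (r + (j : ℕ) * m) ω) ≤ ε}) :=
        measure_mono hsub
    _ ≤ ∑ r ∈ Finset.Icc 1 m, μ {ω | (∑ j : Fin N, Z (r + (j : ℕ) * m) ω) ≤ ε} :=
        measure_biUnion_finset_le _ _
    _ ≤ ∑ r ∈ Finset.Icc 1 m, ENNReal.ofReal (2 * Real.exp (-(3 / 14) * ε)) :=
        Finset.sum_le_sum hclass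
    _ = (m : ENNReal) * ENNReal.ofReal (2 * Real.exp (-(3 / 14) * ε)) := by
        rw [Finset.sum_const, Nat.card_Icc]
        simp [nsmul_eq_mul]
    _ = ENNReal.ofReal (2 * m * Real.exp (-(3 / 14) * k / m)) := by
        rw [← ENNReal.ofReal_natCast, ← ENNReal.ofReal_mul (by positivity)]
        congr 1
        rw [hεdef]
        ring
end

section
/- Let (F, d) be a pseudometric space, H a normed space, B, M₀ > 0, α > 0, and let r : F → H satisfy ‖r(y)‖ ≤ B for all y ∈ F and ‖r(y) − r(y')‖ ≤ M₀·d(y, y')^α for all y, y' ∈ F. Let x, X₁,…,X_n ∈ F be points ordered so that d(X_{R₁}, x) ≤ d(X_{R₂}, x) ≤ … ≤ d(X_{R_n}, x), let v_{n1} ≥ v_{n2} ≥ … ≥ v_{nn} ≥ 0 be weights with Σ_{i=1}^n v_{ni} = 1, let 1 ≤ k ≤ n, and set H := d(X_{R_k}, x). Then ‖Σ_{i=1}^n v_{ni}(r(X_{R_i}) − r(x))‖ ≤ 2B·Σ_{i=k+1}^n v_{ni} + M₀·H^α. -/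
/-- bias bound: if `r : F → H` is bounded by `B` and `α`-Hölder with
constant `M₀`, the points `X_{R₁}, …, X_{R_n}` are ordered by increasing distance to `x`,
and `v_{n1} ≥ ⋯ ≥ v_{nn} ≥ 0` are weights summing to `1`, then with `H = d(X_{R_k}, x)`,
`‖Σᵢ v_{ni}(r(X_{R_i}) − r(x))‖ ≤ 2B·Σ_{i=k+1}^n v_{ni} + M₀·H^α`. -/
theorem stmt_18 {F : Type*} [PseudoMetricSpace F] {H : Type*} [NormedAddCommGroup H]
    [NormedSpace ℝ H]
    (B M₀ α : ℝ) (hB : 0 < B) (hM₀ : 0 < M₀) (hα : 0 < α)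
    (r : F → H) (hrB : ∀ y : F, ‖r y‖ ≤ B)
    (hrH : ∀ y y' : F, ‖r y - r y'‖ ≤ M₀ * dist y y' ^ α)
    (n : ℕ) (hn : 1 ≤ n) (x : F) (X : ℕ → F) (R : ℕ → ℕ)
    (hR : Set.BijOn R (Set.Icc 1 n) (Set.Icc 1 n))
    (hsort : ∀ i j : ℕ, 1 ≤ i → i ≤ j → j ≤ n → dist (X (R i)) x ≤ dist (X (R j)) x)
    (v : ℕ → ℝ) (hv0 : ∀ i, 0 ≤ v i)
    (hvmono : ∀ i j : ℕ, 1 ≤ i → i ≤ j → j ≤ n → v j ≤ v i)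
    (hvsum : ∑ i ∈ Finset.Icc 1 n, v i = 1)
    (k : ℕ) (hk1 : 1 ≤ k) (hkn : k ≤ n) :
    ‖∑ i ∈ Finset.Icc 1 n, v i • (r (X (R i)) - r x)‖
      ≤ 2 * B * ∑ i ∈ Finset.Icc (k + 1) n, v i + M₀ * dist (X (R k)) x ^ α := by
  have hsplit : Finset.Icc 1 n = Finset.Icc 1 k ∪ Finset.Icc (k + 1) n := by
    ext a; simp only [Finset.mem_Icc, Finset.mem_union]; omega
  have hdisj : Disjoint (Finset.Icc 1 k) (Finset.Icc (k + 1) n) := by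
    apply Finset.disjoint_left.2
    intro a ha hb
    simp only [Finset.mem_Icc] at ha hb
    omega
  have hnorm : ∀ i ∈ Finset.Icc 1 n, ‖v i • (r (X (R i)) - r x)‖
      = v i * ‖r (X (R i)) - r x‖ := by
    intro i _
    rw [norm_smul, Real.norm_of_nonneg (hv0 i)]
  calc ‖∑ i ∈ Finset.Icc 1 n, v i • (r (X (R i)) - r x)‖
      ≤ ∑ i ∈ Finset.Icc 1 n, ‖v i • (r (X (R i)) - r x)‖ := norm_sum_le _ _
    _ = ∑ i ∈ Finset.Icc 1 k, ‖v i • (r (X (R i)) - r x)‖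
        + ∑ i ∈ Finset.Icc (k + 1) n, ‖v i • (r (X (R i)) - r x)‖ := by
        rw [hsplit, Finset.sum_union hdisj]
    _ ≤ ∑ i ∈ Finset.Icc 1 k, v i * (M₀ * dist (X (R k)) x ^ α)
        + ∑ i ∈ Finset.Icc (k + 1) n, v i * (2 * B) := by
        gcongr with i hi i hi
        · simp only [Finset.mem_Icc] at hi
          rw [norm_smul, Real.norm_of_nonneg (hv0 i)]
          apply mul_le_mul_of_nonneg_left _ (hv0 i)
          calc ‖r (X (R i)) - r x‖ ≤ M₀ * dist (X (R i)) x ^ α := hrH _ _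
            _ ≤ M₀ * dist (X (R k)) x ^ α := by
                apply mul_le_mul_of_nonneg_left _ hM₀.le
                exact Real.rpow_le_rpow dist_nonneg
                  (hsort i k hi.1 hi.2 hkn) hα.le
        · simp only [Finset.mem_Icc] at hi
          rw [norm_smul, Real.norm_of_nonneg (hv0 i)]
          apply mul_le_mul_of_nonneg_left _ (hv0 i)
          calc ‖r (X (R i)) - r x‖ ≤ ‖r (X (R i))‖ + ‖r x‖ := norm_sub_le _ _
            _ ≤ B + B := add_le_add (hrB _) (hrB _)
            _ = 2 * B := by ring
    _ ≤ 2 * B * ∑ i ∈ Finset.Icc (k + 1) n, v i + M₀ * dist (X (R k)) x ^ α := by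
        rw [← Finset.sum_mul, ← Finset.sum_mul, add_comm]
        gcongr ?_ + ?_
        · rw [mul_comm]
        · have hsub : ∑ i ∈ Finset.Icc 1 k, v i ≤ 1 := by
            rw [← hvsum]
            exact Finset.sum_le_sum_of_subset_of_nonneg
              (Finset.Icc_subset_Icc le_rfl hkn) (fun i _ _ => hv0 i)
          have hpos : 0 ≤ M₀ * dist (X (R k)) x ^ α :=
            mul_nonneg hM₀.le (Real.rpow_nonneg dist_nonneg _)
          calc (∑ i ∈ Finset.Icc 1 k, v i) * (M₀ * dist (X (R k)) x ^ α)
              ≤ 1 * (M₀ * dist (X (R k)) x ^ α) := by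
                exact mul_le_mul_of_nonneg_right hsub hpos
            _ = M₀ * dist (X (R k)) x ^ α := one_mul _
end
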